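/- Let E be the affine cubic curve u₁x³ + u₂x²y + u₃xy² + u₄y³ + u₅x² + u₆xy + u₇y² + u₈x + u₉y + u₁₀ = 0, and let P₁ = (x₁,y₁), P₂ = (x₂,y₂) be points on E with x₁ ≠ x₂. Set ν = (y₂−y₁)/(x₂−x₁), β = y₁ − νx₁, and suppose u₄ν³ + u₃ν² + u₂ν + u₁ ≠ 0. Define γ = ((3u₄β+u₇)ν² + (2u₃β+u₆)ν + u₂β + u₅)/(u₄ν³+u₃ν²+u₂ν+u₁) and δ = (u₇ν³ − (u₃β−u₆)ν² − (2u₂β−u₅)ν − 3u₁β)/(u₄ν³+u₃ν²+u₂ν+u₁). Then the point P₃ = (−(x₁+x₂+γ), −(y₁+y₂+δ)) lies on E and on the line through P₁ and P₂. -/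

import Mathlib

/-- Manin involution with respect to a finite point: the point
`P₃ = (−(x₁+x₂+γ), −(y₁+y₂+δ))` lies on the cubic and on the line through `P₁`, `P₂`. -/
theorem manin_involution_finite
    (u1 u2 u3 u4 u5 u6 u7 u8 u9 u10 x1 y1 x2 y2 ν β γ δ : ℂ)
    (hP1 : u1*x1^3 + u2*x1^2*y1 + u3*x1*y1^2 + u4*y1^3 + u5*x1^2 + u6*x1*y1 + u7*y1^2
      + u8*x1 + u9*y1 + u10 = 0)
    (hP2 : u1*x2^3 + u2*x2^2*y2 + u3*x2*y2^2 + u4*y2^3 + u5*x2^2 + u6*x2*y2 + u7*y2^2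
      + u8*x2 + u9*y2 + u10 = 0)
    (hx12 : x1 ≠ x2)
    (hν : ν = (y2 - y1) / (x2 - x1))
    (hβ : β = y1 - ν*x1)
    (hden : u4*ν^3 + u3*ν^2 + u2*ν + u1 ≠ 0)
    (hγ : γ = ((3*u4*β + u7)*ν^2 + (2*u3*β + u6)*ν + u2*β + u5)
      / (u4*ν^3 + u3*ν^2 + u2*ν + u1))
    (hδ : δ = (u7*ν^3 - (u3*β - u6)*ν^2 - (2*u2*β - u5)*ν - 3*u1*β)
      / (u4*ν^3 + u3*ν^2 + u2*ν + u1))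
    (x3 y3 : ℂ) (hx3 : x3 = -(x1 + x2 + γ)) (hy3 : y3 = -(y1 + y2 + δ)) :
    u1*x3^3 + u2*x3^2*y3 + u3*x3*y3^2 + u4*y3^3 + u5*x3^2 + u6*x3*y3 + u7*y3^2
      + u8*x3 + u9*y3 + u10 = 0 ∧ y3 = ν*x3 + β := by
  have hx12' : x2 - x1 ≠ 0 := sub_ne_zero.mpr (Ne.symm hx12)
  have hy1 : y1 = ν*x1 + β := by rw [hβ]; ring
  have hy2 : y2 = ν*x2 + β := by
    rw [hβ, hν]; field_simp; ring
  have hγ' : γ*(u4*ν^3 + u3*ν^2 + u2*ν + u1)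
      = (3*u4*β + u7)*ν^2 + (2*u3*β + u6)*ν + u2*β + u5 := by
    rw [hγ]; exact div_mul_cancel₀ _ hden
  have hδ' : δ*(u4*ν^3 + u3*ν^2 + u2*ν + u1)
      = u7*ν^3 - (u3*β - u6)*ν^2 - (2*u2*β - u5)*ν - 3*u1*β := by
    rw [hδ]; exact div_mul_cancel₀ _ hden
  have hline : y3 = ν*x3 + β := by
    have h : (u4*ν^3 + u3*ν^2 + u2*ν + u1) * (y3 - (ν*x3 + β)) = 0 := by
      rw [hy3, hx3, hy1, hy2]; linear_combination ν*hγ' - hδ'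
    rcases mul_eq_zero.mp h with h' | h'
    · exact absurd h' hden
    · exact sub_eq_zero.mp h'
  refine ⟨?_, hline⟩
  rw [hy1] at hP1
  rw [hy2] at hP2
  rw [hline, hx3]
  have key : (x1 - x2) * (u1*(-(x1 + x2 + γ))^3 + u2*(-(x1 + x2 + γ))^2*(ν*(-(x1 + x2 + γ)) + β)
      + u3*(-(x1 + x2 + γ))*(ν*(-(x1 + x2 + γ)) + β)^2 + u4*(ν*(-(x1 + x2 + γ)) + β)^3
      + u5*(-(x1 + x2 + γ))^2 + u6*(-(x1 + x2 + γ))*(ν*(-(x1 + x2 + γ)) + β)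
      + u7*(ν*(-(x1 + x2 + γ)) + β)^2 + u8*(-(x1 + x2 + γ)) + u9*(ν*(-(x1 + x2 + γ)) + β) + u10) = 0 := by
    linear_combination (-(x2 - -(x1+x2+γ)))*hP1 + (-(-(x1+x2+γ) - x1))*hP2
      + ((x1-x2)*(x2 - -(x1+x2+γ))*(-(x1+x2+γ) - x1))*hγ'
  have hx12'' : x1 - x2 ≠ 0 := sub_ne_zero.mpr hx12
  rcases mul_eq_zero.mp key with h' | h'
  · exact absurd h' hx12''
  · exact h'
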